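/- Let n be a positive natural number and let m ≤ n and d be natural numbers. Summing over all d-tuples (A_1, …, A_d) of m-element subsets of Fin n, one has ∑_{(A_1,…,A_d)} (n − |A_1 ∪ ⋯ ∪ A_d|) = n · C(n−1, m)^d, where |·| denotes cardinality and C(n−1, m) is the binomial coefficient. -/
import Mathlib

open Finset

lemma card_msubsets_avoiding (n m : ℕ) (x : Fin n) :
    ((Finset.univ : Finset (Finset (Fin n))).filter
      (fun B => B.card = m ∧ x ∉ B)).card = (n - 1).choose m := by
  have h : (Finset.univ : Finset (Finset (Fin n))).filter (fun B => B.card = m ∧ x ∉ B)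
      = Finset.powersetCard m ((Finset.univ : Finset (Fin n)).erase x) := by
    ext B
    simp [Finset.mem_powersetCard, Finset.subset_erase, and_comm]
  rw [h, Finset.card_powersetCard, Finset.card_erase_of_mem (Finset.mem_univ x),
    Finset.card_univ, Fintype.card_fin]

/-- Combinatorial core of Proposition 2: summing `n - |A₁ ∪ ⋯ ∪ A_d|` over all
`d`-tuples of `m`-element subsets of `Fin n` gives `n * ((n-1).choose m)^d`. -/
theorem sum_missing_fragments (n m d : ℕ) (hn : 0 < n) (hm : m ≤ n) :
    ∑ A ∈ (Finset.univ : Finset (Fin d → Finset (Fin n))).filter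
        (fun A => ∀ i, (A i).card = m),
      (n - (Finset.univ.biUnion A).card) = n * ((n - 1).choose m) ^ d := by
  classical
  have step1 : ∀ A : Fin d → Finset (Fin n),
      n - (Finset.univ.biUnion A).card
        = ∑ x : Fin n, if ∀ i, x ∉ A i then 1 else 0 := by
    intro A
    have hc : (Finset.univ.biUnion A)ᶜ.card = n - (Finset.univ.biUnion A).card := by
      rw [Finset.card_compl, Fintype.card_fin]
    rw [← hc, Finset.card_eq_sum_ones, ← Finset.sum_filter]
    congr 1
    ext y
    simp [Finset.mem_biUnion]
  calc ∑ A ∈ (Finset.univ : Finset (Fin d → Finset (Fin n))).filter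
        (fun A => ∀ i, (A i).card = m),
      (n - (Finset.univ.biUnion A).card)
      = ∑ A ∈ (Finset.univ : Finset (Fin d → Finset (Fin n))).filter
          (fun A => ∀ i, (A i).card = m),
        ∑ x : Fin n, (if ∀ i, x ∉ A i then 1 else 0) := by
        exact Finset.sum_congr rfl (fun A _ => step1 A)
    _ = ∑ x : Fin n, ∑ A ∈ (Finset.univ : Finset (Fin d → Finset (Fin n))).filter
          (fun A => ∀ i, (A i).card = m), (if ∀ i, x ∉ A i then 1 else 0) :=
        Finset.sum_comm
    _ = ∑ x : Fin n, ((n - 1).choose m) ^ d := by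
        refine Finset.sum_congr rfl (fun x _ => ?_)
        rw [← Finset.sum_filter, Finset.sum_const, smul_eq_mul, mul_one,
          Finset.filter_filter]
        have h2 : (Finset.univ : Finset (Fin d → Finset (Fin n))).filter
            (fun A => (∀ i, (A i).card = m) ∧ ∀ i, x ∉ A i)
          = Fintype.piFinset (fun _ : Fin d =>
              (Finset.univ : Finset (Finset (Fin n))).filter
                (fun B => B.card = m ∧ x ∉ B)) := by
          ext A
          simp [Fintype.mem_piFinset, forall_and]
        rw [h2, Fintype.card_piFinset]
        simp [card_msubsets_avoiding n m x]
    _ = n * ((n - 1).choose m) ^ d := by simp [mul_comm]
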